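/- Let ρ be a density matrix on ℂ^N ⊗ ℂ^N and let X = (x_1,…,x_N) be an orthonormal basis of ℂ^N (a projective measurement on subsystem A). Then there exists a vector s^(x) ∈ ℝ^N with nonnegative entries arranged in descending order and summing to 1 such that: (i) for every orthonormal basis X' of ℂ^N, the majorized marginal distribution satisfies p(x|x') ≺ s^(x); and (ii) s^(x) is the least such upper bound, i.e., every vector t ∈ ℝ^N with nonnegative descending entries summing to 1 that satisfies p(x|x') ≺ t for all orthonormal bases X' also satisfies s^(x) ≺ t. In particular, s^(x) is the unique descending least upper bound and depends only on ρ and X. -/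

import Mathlib

open scoped BigOperators ComplexOrder

/-- The descending rearrangement `v↓` of a vector `v ∈ ℝⁿ`. -/
noncomputable def descSort {n : ℕ} (v : Fin n → ℝ) : Fin n → ℝ :=
  fun i => v (Tuple.sort v i.rev)

/-- The sum of the `k` largest entries of `v`. -/
noncomputable def sumTop {n : ℕ} (v : Fin n → ℝ) (k : ℕ) : ℝ :=
  ∑ i ∈ Finset.univ.filter (fun i : Fin n => (i : ℕ) < k), descSort v i

/-- Majorization `v ≺ w`: for every `k`, the sum of the `k` largest entries of `v` is at
most that of `w`, and the total sums agree. -/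
noncomputable def Majorizes {n : ℕ} (v w : Fin n → ℝ) : Prop :=
  (∀ k : ℕ, sumTop v k ≤ sumTop w k) ∧ (∑ i, v i = ∑ i, w i)

/-- Weak majorization `v ≺_w w`: only the partial-sum inequalities are required. -/
noncomputable def WeakMajorizes {n : ℕ} (v w : Fin n → ℝ) : Prop :=
  ∀ k : ℕ, sumTop v k ≤ sumTop w k

/-- `x : Fin N → (Fin N → ℂ)` is an orthonormal basis of `ℂ^N` (with the standard
inner product): `⟨x i, x j⟩ = δ_{ij}`. -/
def IsONB {N : ℕ} (x : Fin N → Fin N → ℂ) : Prop :=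
  ∀ i j, ∑ a, (starRingEnd ℂ) (x i a) * x j a = if i = j then 1 else 0

/-- A density matrix on `ℂ^N ⊗ ℂ^N`: positive semidefinite with trace one. -/
def IsDensityMatrix {N : ℕ} (ρ : Matrix (Fin N × Fin N) (Fin N × Fin N) ℂ) : Prop :=
  ρ.PosSemidef ∧ ρ.trace = 1

/-- The joint outcome distribution `P_{ij} = ⟨x_i ⊗ x'_j, ρ (x_i ⊗ x'_j)⟩` of the
projective measurements given by the bases `x` (on subsystem A) and `x'` (on subsystem B). -/
noncomputable def jointProb {N : ℕ} (ρ : Matrix (Fin N × Fin N) (Fin N × Fin N) ℂ)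
    (x x' : Fin N → Fin N → ℂ) (i j : Fin N) : ℝ :=
  (∑ p : Fin N × Fin N, ∑ q : Fin N × Fin N,
    (starRingEnd ℂ) (x i p.1 * x' j p.2) * ρ p q * (x i q.1 * x' j q.2)).re

/-- The majorized marginal distribution `p(x|x') = Σ_j (v^{(j)})↓`, where `v^{(j)}` is the
`j`-th column of the joint distribution `P(X,X')`. -/
noncomputable def majMarginal {N : ℕ} (ρ : Matrix (Fin N × Fin N) (Fin N × Fin N) ℂ)
    (x x' : Fin N → Fin N → ℂ) : Fin N → ℝ :=
  fun i => ∑ j, descSort (fun a => jointProb ρ x x' a j) i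

/-! ### Auxiliary lemmas on `descSort` and `sumTop` -/

lemma sum_descSort {n : ℕ} (v : Fin n → ℝ) : ∑ i, descSort v i = ∑ i, v i := by
  have h1 := Equiv.sum_comp (Fin.revPerm : Equiv.Perm (Fin n)) (fun i => v (Tuple.sort v i))
  have h2 := Equiv.sum_comp (Tuple.sort v) v
  simpa [descSort] using h1.trans h2

lemma sumTop_zero {n : ℕ} (v : Fin n → ℝ) : sumTop v 0 = 0 := by
  simp [sumTop]

lemma sumTop_succ {n : ℕ} (v : Fin n → ℝ) {k : ℕ} (hk : k < n) :
    sumTop v (k + 1) = sumTop v k + descSort v ⟨k, hk⟩ := by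
  unfold sumTop
  rw [show (Finset.univ.filter (fun i : Fin n => (i : ℕ) < k + 1)) =
      insert (⟨k, hk⟩ : Fin n) (Finset.univ.filter (fun i : Fin n => (i : ℕ) < k)) from ?_,
    Finset.sum_insert (by simp)]
  · ring
  · ext i
    simp [Nat.lt_succ_iff_lt_or_eq, Fin.ext_iff, or_comm]
    exact Nat.le_iff_lt_or_eq.trans Or.comm

lemma sumTop_of_ge {n : ℕ} (v : Fin n → ℝ) {k : ℕ} (hk : n ≤ k) :
    sumTop v k = ∑ i, v i := by
  unfold sumTop
  rw [Finset.filter_true_of_mem (fun i _ => lt_of_lt_of_le i.isLt hk)]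
  exact sum_descSort v

lemma sumTop_succ' {n : ℕ} (v : Fin n → ℝ) (k : ℕ) :
    sumTop v (k + 1) = sumTop v k + if h : k < n then descSort v ⟨k, h⟩ else 0 := by
  split
  · exact sumTop_succ v ‹_›
  · rename_i hnk
    rw [sumTop_of_ge v (show n ≤ k+1 by omega), sumTop_of_ge v (Nat.le_of_not_lt hnk), add_zero]

lemma descSort_nonneg {n : ℕ} {v : Fin n → ℝ} (hv : ∀ i, 0 ≤ v i) (i : Fin n) :
    0 ≤ descSort v i := hv _

lemma sumTop_mono {n : ℕ} {v : Fin n → ℝ} (hv : ∀ i, 0 ≤ v i) : Monotone (sumTop v) := by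
  apply monotone_nat_of_le_succ
  intro k
  rw [sumTop_succ' v k]
  split
  · linarith [descSort_nonneg hv (⟨k, ‹_›⟩ : Fin n)]
  · simp

lemma sumTop_nonneg {n : ℕ} {v : Fin n → ℝ} (hv : ∀ i, 0 ≤ v i) (k : ℕ) :
    0 ≤ sumTop v k := by
  have := sumTop_mono hv (Nat.zero_le k)
  rwa [sumTop_zero] at this

lemma sumTop_le_total {n : ℕ} {v : Fin n → ℝ} (hv : ∀ i, 0 ≤ v i) (k : ℕ) :
    sumTop v k ≤ ∑ i, v i := by
  rw [← sumTop_of_ge v (le_max_left n k)]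
  exact sumTop_mono hv (le_max_right n k)

lemma descSort_antitone {n : ℕ} (v : Fin n → ℝ) : Antitone (descSort v) := by
  intro i j hij
  exact Tuple.monotone_sort v (Fin.rev_le_rev.mpr hij)

lemma sumTop_concave {n : ℕ} {v : Fin n → ℝ} (hv : ∀ i, 0 ≤ v i) (k : ℕ) :
    sumTop v k + sumTop v (k + 2) ≤ sumTop v (k + 1) + sumTop v (k + 1) := by
  rw [show k + 2 = (k+1) + 1 by ring, sumTop_succ' v (k+1), sumTop_succ' v k]
  have : (if h : k + 1 < n then descSort v ⟨k+1, h⟩ else 0) ≤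
      (if h : k < n then descSort v ⟨k, h⟩ else 0) := by
    split
    · rw [dif_pos (by omega)]
      exact descSort_antitone v (by simp [Fin.le_def])
    · split
      · exact descSort_nonneg hv _
      · exact le_refl _
  linarith

lemma descSort_eq_self {n : ℕ} {v : Fin n → ℝ} (hv : Antitone v) : descSort v = v := by
  have h : v ∘ (Fin.revPerm : Equiv.Perm (Fin n)) = v ∘ Tuple.sort v := by
    rw [Tuple.comp_sort_eq_comp_iff_monotone]
    intro i j hij
    exact hv (Fin.rev_le_rev.mpr hij)
  funext i
  have := congrFun h.symm i.rev
  simpa [descSort, Function.comp] using this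

lemma antitone_eq_of_sumTop_eq {n : ℕ} {v w : Fin n → ℝ} (hv : Antitone v) (hw : Antitone w)
    (h : ∀ k, sumTop v k = sumTop w k) : v = w := by
  funext i
  have h1 := sumTop_succ v i.isLt
  have h2 := sumTop_succ w i.isLt
  rw [descSort_eq_self hv] at h1
  rw [descSort_eq_self hw] at h2
  have hi : (⟨(i : ℕ), i.isLt⟩ : Fin n) = i := by simp
  rw [hi] at h1 h2
  have := h ((i : ℕ) + 1); have := h (i : ℕ)
  linarith

/-! ### Auxiliary lemmas on the quantum side -/

lemma onb_completeness {N : ℕ} {x : Fin N → Fin N → ℂ} (hx : IsONB x) (a b : Fin N) :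
    ∑ i, (starRingEnd ℂ) (x i a) * x i b = if a = b then 1 else 0 := by
  set U : Matrix (Fin N) (Fin N) ℂ := Matrix.of x with hU
  have hUU : U * U.conjTranspose = 1 := by
    ext i j
    simp only [Matrix.mul_apply, Matrix.conjTranspose_apply, Matrix.one_apply]
    calc ∑ a, U i a * star (U j a) = ∑ a, (starRingEnd ℂ) (x j a) * x i a := by
          apply Finset.sum_congr rfl; intro a _; simp [hU]; ring
      _ = if j = i then 1 else 0 := hx j i
      _ = if i = j then 1 else 0 := by by_cases h : i = j <;> simp [h, eq_comm]
  have hUU' : U.conjTranspose * U = 1 := mul_eq_one_comm.mp hUU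
  have h2 : (U.conjTranspose * U) a b = (1 : Matrix (Fin N) (Fin N) ℂ) a b := by rw [hUU']
  simp only [Matrix.mul_apply, Matrix.conjTranspose_apply, Matrix.one_apply] at h2
  calc ∑ i, (starRingEnd ℂ) (x i a) * x i b = ∑ i, star (U i a) * U i b := by
        apply Finset.sum_congr rfl; intro i _; simp [hU]
    _ = if a = b then 1 else 0 := h2

lemma jointProb_nonneg {N : ℕ} {ρ : Matrix (Fin N × Fin N) (Fin N × Fin N) ℂ}
    (hρ : ρ.PosSemidef) (x x' : Fin N → Fin N → ℂ) (i j : Fin N) :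
    0 ≤ jointProb ρ x x' i j := by
  set y : Fin N × Fin N → ℂ := fun p => x i p.1 * x' j p.2 with hy
  have h := hρ.dotProduct_mulVec_nonneg y
  have heq : dotProduct (star y) (ρ.mulVec y) =
      ∑ p : Fin N × Fin N, ∑ q : Fin N × Fin N,
        (starRingEnd ℂ) (x i p.1 * x' j p.2) * ρ p q * (x i q.1 * x' j q.2) := by
    simp only [dotProduct, Matrix.mulVec, Pi.star_apply, hy, Finset.mul_sum]
    apply Finset.sum_congr rfl; intro p _
    apply Finset.sum_congr rfl; intro q _
    simp only [starRingEnd_apply]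
    ring
  rw [heq] at h
  have := (Complex.le_def.mp h).1
  simpa [jointProb] using this

lemma sum_jointProb {N : ℕ} {ρ : Matrix (Fin N × Fin N) (Fin N × Fin N) ℂ}
    (hρtr : ρ.trace = 1) {x x' : Fin N → Fin N → ℂ} (hx : IsONB x) (hx' : IsONB x') :
    ∑ i, ∑ j, jointProb ρ x x' i j = 1 := by
  have key : (∑ i, ∑ j, ∑ p : Fin N × Fin N, ∑ q : Fin N × Fin N,
      (starRingEnd ℂ) (x i p.1 * x' j p.2) * ρ p q * (x i q.1 * x' j q.2)) = ρ.trace := by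
    have hswap : ∀ T : Fin N → Fin N → (Fin N × Fin N) → (Fin N × Fin N) → ℂ,
        (∑ i, ∑ j, ∑ p : Fin N × Fin N, ∑ q : Fin N × Fin N, T i j p q) =
        ∑ p : Fin N × Fin N, ∑ q : Fin N × Fin N, ∑ i, ∑ j, T i j p q := by
      intro T
      calc (∑ i, ∑ j, ∑ p : Fin N × Fin N, ∑ q : Fin N × Fin N, T i j p q)
          = ∑ i, ∑ p : Fin N × Fin N, ∑ j, ∑ q : Fin N × Fin N, T i j p q :=
            Finset.sum_congr rfl fun i _ => Finset.sum_comm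
        _ = ∑ p : Fin N × Fin N, ∑ i, ∑ j, ∑ q : Fin N × Fin N, T i j p q :=
            Finset.sum_comm
        _ = ∑ p : Fin N × Fin N, ∑ i, ∑ q : Fin N × Fin N, ∑ j, T i j p q :=
            Finset.sum_congr rfl fun p _ => Finset.sum_congr rfl fun i _ => Finset.sum_comm
        _ = ∑ p : Fin N × Fin N, ∑ q : Fin N × Fin N, ∑ i, ∑ j, T i j p q :=
            Finset.sum_congr rfl fun p _ => Finset.sum_comm
    rw [hswap]
    calc (∑ p : Fin N × Fin N, ∑ q : Fin N × Fin N, ∑ i, ∑ j,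
          (starRingEnd ℂ) (x i p.1 * x' j p.2) * ρ p q * (x i q.1 * x' j q.2))
        = ∑ p : Fin N × Fin N, ∑ q : Fin N × Fin N, ρ p q *
            ((∑ i, (starRingEnd ℂ) (x i p.1) * x i q.1) *
             (∑ j, (starRingEnd ℂ) (x' j p.2) * x' j q.2)) := by
          apply Finset.sum_congr rfl; intro p _
          apply Finset.sum_congr rfl; intro q _
          simp only [Finset.mul_sum, Finset.sum_mul, map_mul]
          rw [Finset.sum_comm]
          apply Finset.sum_congr rfl; intro i _
          apply Finset.sum_congr rfl; intro j _
          ring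
      _ = ∑ p : Fin N × Fin N, ∑ q : Fin N × Fin N, ρ p q * (if p = q then 1 else 0) := by
          apply Finset.sum_congr rfl; intro p _
          apply Finset.sum_congr rfl; intro q _
          rw [onb_completeness hx p.1 q.1, onb_completeness hx' p.2 q.2]
          congr 1
          by_cases h1 : p.1 = q.1 <;> by_cases h2 : p.2 = q.2 <;>
            simp [h1, h2, Prod.ext_iff]
      _ = ∑ p : Fin N × Fin N, ρ p p := by
          apply Finset.sum_congr rfl; intro p _
          simp only [mul_ite, mul_one, mul_zero]
          exact Finset.sum_ite_eq Finset.univ p (fun q => ρ p q) |>.trans (by simp)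
      _ = ρ.trace := rfl
  have hre : ∑ i, ∑ j, jointProb ρ x x' i j =
      (∑ i, ∑ j, ∑ p : Fin N × Fin N, ∑ q : Fin N × Fin N,
        (starRingEnd ℂ) (x i p.1 * x' j p.2) * ρ p q * (x i q.1 * x' j q.2)).re := by
    simp [jointProb, Complex.re_sum]
  rw [hre, key, hρtr]
  simp

lemma majMarginal_nonneg {N : ℕ} {ρ : Matrix (Fin N × Fin N) (Fin N × Fin N) ℂ}
    (hρ : ρ.PosSemidef) (x x' : Fin N → Fin N → ℂ) (i : Fin N) :
    0 ≤ majMarginal ρ x x' i :=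
  Finset.sum_nonneg fun j _ =>
    descSort_nonneg (fun a => jointProb_nonneg hρ x x' a j) i

lemma majMarginal_sum {N : ℕ} {ρ : Matrix (Fin N × Fin N) (Fin N × Fin N) ℂ}
    (hρtr : ρ.trace = 1) {x x' : Fin N → Fin N → ℂ} (hx : IsONB x) (hx' : IsONB x') :
    ∑ i, majMarginal ρ x x' i = 1 := by
  calc ∑ i, majMarginal ρ x x' i
      = ∑ i, ∑ j, descSort (fun a => jointProb ρ x x' a j) i := rfl
    _ = ∑ j, ∑ i, descSort (fun a => jointProb ρ x x' a j) i := Finset.sum_comm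
    _ = ∑ j, ∑ i, jointProb ρ x x' i j :=
        Finset.sum_congr rfl fun j _ => sum_descSort _
    _ = ∑ i, ∑ j, jointProb ρ x x' i j := Finset.sum_comm
    _ = 1 := sum_jointProb hρtr hx hx'

/-- Given a density matrix `ρ` on `ℂ^N ⊗ ℂ^N` and a projective measurement
(orthonormal basis) `X` on subsystem A, there is a unique vector `s^(x) ∈ ℝ^N` with
nonnegative entries, arranged in descending order and summing to `1`, such that
(i) `p(x|x') ≺ s^(x)` for every orthonormal basis `X'` of `ℂ^N`, and
(ii) `s^(x)` is the least such upper bound: any descending nonnegative `t` summing to `1`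
which majorizes every `p(x|x')` also satisfies `s^(x) ≺ t`. -/
theorem least_upper_bound_of_majorized_marginals {N : ℕ}
    (ρ : Matrix (Fin N × Fin N) (Fin N × Fin N) ℂ) (hρ : IsDensityMatrix ρ)
    (x : Fin N → Fin N → ℂ) (hx : IsONB x) :
    ∃! s : Fin N → ℝ,
      (∀ i, 0 ≤ s i) ∧ Antitone s ∧ (∑ i, s i = 1) ∧
      (∀ x' : Fin N → Fin N → ℂ, IsONB x' → Majorizes (majMarginal ρ x x') s) ∧
      (∀ t : Fin N → ℝ, (∀ i, 0 ≤ t i) → Antitone t → (∑ i, t i = 1) →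
        (∀ x' : Fin N → Fin N → ℂ, IsONB x' → Majorizes (majMarginal ρ x x') t) →
        Majorizes s t) := by
  obtain ⟨hpsd, htr⟩ := hρ
  have hN : 0 < N := by
    rcases Nat.eq_zero_or_pos N with h | h
    · exfalso
      subst h
      have : ρ.trace = 0 := by
        simp [Matrix.trace]
      rw [htr] at this
      exact one_ne_zero this
    · exact h
  -- the set of admissible upper bounds
  set S : Set (Fin N → ℝ) := {t | (∀ i, 0 ≤ t i) ∧ Antitone t ∧ (∑ i, t i = 1) ∧
    (∀ x' : Fin N → Fin N → ℂ, IsONB x' → Majorizes (majMarginal ρ x x') t)} with hS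
  -- the trivial upper bound (1,0,…,0)
  set t0 : Fin N → ℝ := fun i => if (i : ℕ) = 0 then 1 else 0 with ht0
  have ht0nn : ∀ i, 0 ≤ t0 i := by
    intro i; simp only [ht0]; split <;> norm_num
  have ht0anti : Antitone t0 := by
    intro i j hij
    simp only [ht0]
    split
    · split
      · exact le_refl _
      · omega
    · split <;> norm_num
  have ht0sum : ∑ i, t0 i = 1 := by
    rw [show t0 = fun i => if i = (⟨0, hN⟩ : Fin N) then (1:ℝ) else 0 from
      funext fun i => by simp [ht0, Fin.ext_iff]]
    simp
  have ht0maj : ∀ x' : Fin N → Fin N → ℂ, IsONB x' → Majorizes (majMarginal ρ x x') t0 := by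
    intro x' hx'
    constructor
    · intro k
      cases k with
      | zero => rw [sumTop_zero, sumTop_zero]
      | succ k =>
        have h1 : sumTop (majMarginal ρ x x') (k+1) ≤ 1 := by
          have := sumTop_le_total (majMarginal_nonneg hpsd x x') (k+1)
          rwa [majMarginal_sum htr hx hx'] at this
        have h2 : (1 : ℝ) ≤ sumTop t0 (k+1) := by
          have hm := sumTop_mono ht0nn (show 1 ≤ k + 1 by omega)
          have h01 : sumTop t0 1 = 1 := by
            rw [show (1:ℕ) = 0 + 1 from rfl, sumTop_succ t0 hN, sumTop_zero,
              descSort_eq_self ht0anti]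
            simp [ht0]
          linarith
        linarith
    · rw [majMarginal_sum htr hx hx', ht0sum]
  have ht0S : t0 ∈ S := ⟨ht0nn, ht0anti, ht0sum, ht0maj⟩
  -- the infimum of partial sums over S
  set f : ℕ → ℝ := fun k => sInf ((fun t => sumTop t k) '' S) with hf
  have hne : ∀ k, ((fun t => sumTop t k) '' S).Nonempty := fun k => ⟨_, t0, ht0S, rfl⟩
  have hbdd : ∀ k, BddBelow ((fun t => sumTop t k) '' S) := by
    intro k
    refine ⟨0, ?_⟩
    rintro y ⟨t, htS, rfl⟩
    exact sumTop_nonneg htS.1 k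
  have hf_le : ∀ k, ∀ t ∈ S, f k ≤ sumTop t k := by
    intro k t htS
    exact csInf_le (hbdd k) ⟨t, htS, rfl⟩
  have hf_ge : ∀ k c, (∀ t ∈ S, c ≤ sumTop t k) → c ≤ f k := by
    intro k c hc
    apply le_csInf (hne k)
    rintro y ⟨t, htS, rfl⟩
    exact hc t htS
  have hf0 : f 0 = 0 := by
    apply le_antisymm
    · have := hf_le 0 t0 ht0S
      rwa [sumTop_zero] at this
    · exact hf_ge 0 0 fun t htS => sumTop_nonneg htS.1 0
  have hfN : ∀ k, N ≤ k → f k = 1 := by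
    intro k hk
    apply le_antisymm
    · have := hf_le k t0 ht0S
      rwa [sumTop_of_ge t0 hk, ht0sum] at this
    · apply hf_ge
      intro t htS
      rw [sumTop_of_ge t hk, htS.2.2.1]
  have hf_mono : Monotone f := by
    apply monotone_nat_of_le_succ
    intro k
    apply hf_ge
    intro t htS
    exact le_trans (hf_le k t htS) (sumTop_mono htS.1 (Nat.le_succ k))
  have hf_conc : ∀ k, f k + f (k + 2) ≤ f (k + 1) + f (k + 1) := by
    intro k
    apply le_of_forall_pos_le_add
    intro ε hε
    have hlt : f (k+1) < f (k+1) + ε / 2 := by linarith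
    obtain ⟨y, ⟨t, htS, rfl⟩, hy⟩ := exists_lt_of_csInf_lt (hne (k+1)) hlt
    have h1 := hf_le k t htS
    have h2 := hf_le (k+2) t htS
    have h3 := sumTop_concave htS.1 k
    linarith
  -- the candidate least upper bound
  set s : Fin N → ℝ := fun i => f ((i : ℕ) + 1) - f (i : ℕ) with hs
  have hg_anti : Antitone (fun k : ℕ => f (k + 1) - f k) := by
    apply antitone_nat_of_succ_le
    intro k
    linarith [hf_conc k]
  have hs_nn : ∀ i, 0 ≤ s i := by
    intro i
    simp only [hs, sub_nonneg]
    exact hf_mono (Nat.le_succ _)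
  have hs_anti : Antitone s := by
    intro i j hij
    exact hg_anti (show (i : ℕ) ≤ (j : ℕ) from hij)
  have hs_sum : ∑ i, s i = 1 := by
    rw [hs]
    rw [Fin.sum_univ_eq_sum_range (fun k => f (k + 1) - f k) N]
    rw [Finset.sum_range_sub f]
    rw [hf0, hfN N (le_refl N)]
    ring
  have hs_sumTop : ∀ k, sumTop s k = f k := by
    intro k
    induction k with
    | zero => rw [sumTop_zero, hf0]
    | succ k ih =>
      rw [sumTop_succ' s k, ih, descSort_eq_self hs_anti]
      split
      · simp only [hs, Fin.val_mk]
        ring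
      · rename_i hkn
        rw [add_zero, hfN k (Nat.le_of_not_lt hkn), hfN (k+1) (by omega)]
  refine ⟨s, ⟨hs_nn, hs_anti, hs_sum, ?_, ?_⟩, ?_⟩
  · -- s is an upper bound
    intro x' hx'
    constructor
    · intro k
      rw [hs_sumTop k]
      apply hf_ge
      intro t htS
      exact (htS.2.2.2 x' hx').1 k
    · rw [majMarginal_sum htr hx hx', hs_sum]
  · -- s is least
    intro t htnn htanti htsum htmaj
    have htS : t ∈ S := ⟨htnn, htanti, htsum, htmaj⟩
    constructor
    · intro k
      rw [hs_sumTop k]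
      exact hf_le k t htS
    · rw [hs_sum, htsum]
  · -- uniqueness
    rintro s' ⟨h1, h2, h3, h4, h5⟩
    have hSs' : Majorizes s' s := h5 s hs_nn hs_anti hs_sum (by
      intro x' hx'
      constructor
      · intro k
        rw [hs_sumTop k]
        apply hf_ge
        intro t htS
        exact (htS.2.2.2 x' hx').1 k
      · rw [majMarginal_sum htr hx hx', hs_sum])
    have hs'S : s' ∈ S := ⟨h1, h2, h3, h4⟩
    have hSs : Majorizes s s' := by
      constructor
      · intro k
        rw [hs_sumTop k]
        exact hf_le k s' hs'S
      · rw [hs_sum, h3]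
    apply antitone_eq_of_sumTop_eq h2 hs_anti
    intro k
    exact le_antisymm (hSs'.1 k) (hSs.1 k)
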